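/- The INMA(q₁,q₂) random field has marginal variance σ_X² = μ_X + (σ_ε² − μ_ε)·Σ_{i=0}^{q₁} Σ_{j=0}^{q₂} β_{ij}², where μ_X = μ_ε β_•. -/

import Mathlib

open MeasureTheory ProbabilityTheory

/-- `T` arises from `Y` by binomial thinning with parameter `β`: conditionally on
`Y = n`, `T ~ Bin(n, β)`. -/
def IsBinomialThinning {Ω : Type*} [MeasurableSpace Ω] (μ : Measure Ω) (β : ℝ)
    (Y T : Ω → ℕ) : Prop :=
  ∀ n k : ℕ, μ {ω | Y ω = n ∧ T ω = k}
    = μ {ω | Y ω = n} * ENNReal.ofReal ((n.choose k : ℝ) * β ^ k * (1 - β) ^ (n - k))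

lemma binom_sum (x y : ℝ) (n : ℕ) :
    ∑ k ∈ Finset.range (n+1), (n.choose k : ℝ) * x^k * y^(n-k) = (x+y)^n := by
  rw [add_pow]
  exact Finset.sum_congr rfl fun k _ => by ring

lemma binom_sum_mul (x y : ℝ) (n : ℕ) :
    ∑ k ∈ Finset.range (n+1), (k : ℝ) * ((n.choose k : ℝ) * x^k * y^(n-k))
      = n * x * (x+y)^(n-1) := by
  cases n with
  | zero => simp
  | succ m =>
    rw [Finset.sum_range_succ']
    simp only [Nat.cast_zero, zero_mul, add_zero]
    have h : ∀ i ∈ Finset.range (m+1),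
        ((i+1 : ℕ) : ℝ) * (((m+1).choose (i+1) : ℝ) * x^(i+1) * y^(m+1-(i+1)))
          = ((m+1 : ℕ) : ℝ) * x * ((m.choose i : ℝ) * x^i * y^(m-i)) := by
      intro i _
      have hc : ((m+1).choose (i+1) * (i+1) : ℕ) = ((m+1) * m.choose i : ℕ) :=
        (Nat.add_one_mul_choose_eq m i).symm
      have hc' : (((m+1).choose (i+1) : ℝ)) * ((i:ℝ)+1) = ((m:ℝ)+1) * (m.choose i : ℝ) := by
        exact_mod_cast congrArg (Nat.cast (R := ℝ)) hc
      have hsub : m + 1 - (i + 1) = m - i := by omega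
      rw [hsub]
      push_cast
      linear_combination (x^(i+1) * y^(m-i)) * hc'
    rw [Finset.sum_congr rfl h, ← Finset.mul_sum, binom_sum]
    push_cast
    ring

lemma binom_sum_mul2 (x y : ℝ) (n : ℕ) :
    ∑ k ∈ Finset.range (n+1), (k : ℝ) * ((k : ℝ) - 1) * ((n.choose k : ℝ) * x^k * y^(n-k))
      = n * (n-1) * x^2 * (x+y)^(n-2) := by
  cases n with
  | zero => simp
  | succ m =>
    rw [Finset.sum_range_succ']
    simp only [Nat.cast_zero, zero_mul, add_zero, zero_sub, mul_zero]
    have h : ∀ i ∈ Finset.range (m+1),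
        ((i+1 : ℕ) : ℝ) * (((i+1 : ℕ) : ℝ) - 1)
            * (((m+1).choose (i+1) : ℝ) * x^(i+1) * y^(m+1-(i+1)))
          = ((m+1 : ℕ) : ℝ) * x * ((i : ℝ) * ((m.choose i : ℝ) * x^i * y^(m-i))) := by
      intro i _
      have hc : ((m+1).choose (i+1) * (i+1) : ℕ) = ((m+1) * m.choose i : ℕ) :=
        (Nat.add_one_mul_choose_eq m i).symm
      have hc' : (((m+1).choose (i+1) : ℝ)) * ((i:ℝ)+1) = ((m:ℝ)+1) * (m.choose i : ℝ) := by
        exact_mod_cast congrArg (Nat.cast (R := ℝ)) hc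
      have hsub : m + 1 - (i + 1) = m - i := by omega
      rw [hsub]
      push_cast
      linear_combination ((i:ℝ) * x^(i+1) * y^(m-i)) * hc'
    rw [Finset.sum_congr rfl h, ← Finset.mul_sum, binom_sum_mul]
    push_cast
    cases m with
    | zero => simp
    | succ l =>
      have h2 : (l + 1 : ℕ) - 1 = l := by omega
      rw [h2]
      ring

lemma thin_lintegral {Ω : Type*} [MeasurableSpace Ω] (μ : Measure Ω) (β : ℝ)
    (Y T : Ω → ℕ) (hY : Measurable Y) (hT : Measurable T)
    (h : IsBinomialThinning μ β Y T) (g : ℕ → ℕ → ENNReal) :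
    ∫⁻ ω, g (Y ω) (T ω) ∂μ
      = ∑' n : ℕ, μ {ω | Y ω = n} *
          ∑ k ∈ Finset.range (n+1), g n k
            * ENNReal.ofReal ((n.choose k : ℝ) * β ^ k * (1 - β) ^ (n - k)) := by
  have hφ : Measurable (fun ω => (Y ω, T ω)) := hY.prodMk hT
  calc ∫⁻ ω, g (Y ω) (T ω) ∂μ
      = ∫⁻ p : ℕ × ℕ, g p.1 p.2 ∂(μ.map (fun ω => (Y ω, T ω))) :=
        (lintegral_map (f := fun p : ℕ × ℕ => g p.1 p.2) (measurable_of_countable _) hφ).symm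
    _ = ∑' p : ℕ × ℕ, g p.1 p.2 * (μ.map (fun ω => (Y ω, T ω))) {p} :=
        lintegral_countable' _
    _ = ∑' p : ℕ × ℕ, g p.1 p.2 * μ {ω | Y ω = p.1 ∧ T ω = p.2} := by
        refine tsum_congr fun p => ?_
        have hpre : (fun ω => (Y ω, T ω)) ⁻¹' {p} = {ω | Y ω = p.1 ∧ T ω = p.2} := by
          ext ω; simp [Prod.ext_iff]
        rw [Measure.map_apply hφ (measurableSet_singleton p), hpre]
    _ = ∑' n : ℕ, ∑' k : ℕ, g n k * μ {ω | Y ω = n ∧ T ω = k} :=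
        ENNReal.tsum_prod (f := fun n k => g n k * μ {ω | Y ω = n ∧ T ω = k})
    _ = _ := by
        refine tsum_congr fun n => ?_
        rw [tsum_eq_sum (s := Finset.range (n+1)) ?_]
        · rw [Finset.mul_sum]
          refine Finset.sum_congr rfl fun k _ => by rw [h n k]; ring
        · intro k hk
          have hnk : n < k := by simpa using hk
          rw [h n k, Nat.choose_eq_zero_of_lt hnk]
          simp

section Moments
open ENNReal

variable {Ω : Type*} [MeasurableSpace Ω] (μ : Measure Ω) [IsProbabilityMeasure μ]

lemma thin_variance (β : ℝ) (hβ0 : 0 ≤ β) (hβ1 : β ≤ 1) (Y T : Ω → ℕ)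
    (hY : Measurable Y) (hT : Measurable T) (h : IsBinomialThinning μ β Y T)
    (hY2 : Integrable (fun ω => ((Y ω : ℝ)) ^ 2) μ) :
    MemLp (fun ω => (T ω : ℝ)) 2 μ ∧
    variance (fun ω => (T ω : ℝ)) μ
      = β * (∫ ω, (Y ω : ℝ) ∂μ)
        + β ^ 2 * (variance (fun ω => (Y ω : ℝ)) μ - ∫ ω, (Y ω : ℝ) ∂μ) := by
  set P : ℕ → ℕ → ℝ := fun n k => (n.choose k : ℝ) * β ^ k * (1 - β) ^ (n - k) with hP
  have hPnn : ∀ n k, 0 ≤ P n k := fun n k =>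
    mul_nonneg (mul_nonneg (Nat.cast_nonneg _) (pow_nonneg hβ0 _))
      (pow_nonneg (by linarith) _)
  have hone : β + (1 - β) = 1 := by ring
  have hPsum : ∀ n, ∑ k ∈ Finset.range (n+1), P n k = 1 := by
    intro n; rw [hP]; simpa [hone] using binom_sum β (1-β) n
  have hPsum1 : ∀ n, ∑ k ∈ Finset.range (n+1), (k:ℝ) * P n k = n * β := by
    intro n
    have := binom_sum_mul β (1-β) n
    rw [hone, one_pow, mul_one] at this
    simpa [hP, mul_assoc] using this
  have hPsum2 : ∀ n, ∑ k ∈ Finset.range (n+1), ((k:ℝ))^2 * P n k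
      = n * β + n * (n-1) * β^2 := by
    intro n
    have h2 := binom_sum_mul2 β (1-β) n
    rw [hone, one_pow, mul_one] at h2
    have h1 := hPsum1 n
    have : ∑ k ∈ Finset.range (n+1), ((k:ℝ))^2 * P n k
        = ∑ k ∈ Finset.range (n+1), ((k:ℝ) * ((k:ℝ) - 1) * P n k + (k:ℝ) * P n k) := by
      refine Finset.sum_congr rfl fun k _ => by ring
    rw [this, Finset.sum_add_distrib, h1]
    have : ∑ k ∈ Finset.range (n+1), (k:ℝ) * ((k:ℝ) - 1) * P n k = n * (n-1) * β^2 := by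
      simpa [hP, mul_assoc] using h2
    rw [this]; ring
  -- the four lintegrals
  set A := ∫⁻ ω, (Y ω : ℝ≥0∞) ∂μ with hA
  set B := ∫⁻ ω, (T ω : ℝ≥0∞) ∂μ with hB
  set C := ∫⁻ ω, ((T ω : ℝ≥0∞))^2 ∂μ with hC
  set D := ∫⁻ ω, ((Y ω : ℝ≥0∞))^2 ∂μ with hD
  have key : ∀ g : ℕ → ℕ → ℝ≥0∞, ∫⁻ ω, g (Y ω) (T ω) ∂μ
      = ∑' n : ℕ, μ {ω | Y ω = n} *
          ∑ k ∈ Finset.range (n+1), g n k * ENNReal.ofReal (P n k) :=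
    fun g => thin_lintegral μ β Y T hY hT h g
  have hAt : A = ∑' n : ℕ, μ {ω | Y ω = n} * ENNReal.ofReal ((n:ℝ)) := by
    rw [hA, key (fun n _ => (n : ℝ≥0∞))]
    refine tsum_congr fun n => ?_
    congr 1
    rw [← Finset.mul_sum, ← ENNReal.ofReal_sum_of_nonneg (fun k _ => hPnn n k), hPsum n]
    simp [ENNReal.ofReal_natCast]
  have hBt : B = ∑' n : ℕ, μ {ω | Y ω = n} * ENNReal.ofReal ((n:ℝ) * β) := by
    rw [hB, key (fun _ k => (k : ℝ≥0∞))]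
    refine tsum_congr fun n => ?_
    congr 1
    have : ∀ k ∈ Finset.range (n+1), (k : ℝ≥0∞) * ENNReal.ofReal (P n k)
        = ENNReal.ofReal ((k:ℝ) * P n k) := by
      intro k _
      rw [ENNReal.ofReal_mul (Nat.cast_nonneg k), ENNReal.ofReal_natCast]
    rw [Finset.sum_congr rfl this, ← ENNReal.ofReal_sum_of_nonneg
      (fun k _ => mul_nonneg (Nat.cast_nonneg k) (hPnn n k)), hPsum1 n]
  have hCt : C = ∑' n : ℕ, μ {ω | Y ω = n}
      * ENNReal.ofReal ((n:ℝ) * β + n * (n-1) * β^2) := by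
    rw [hC, key (fun _ k => ((k : ℝ≥0∞))^2)]
    refine tsum_congr fun n => ?_
    congr 1
    have : ∀ k ∈ Finset.range (n+1), ((k : ℝ≥0∞))^2 * ENNReal.ofReal (P n k)
        = ENNReal.ofReal (((k:ℝ))^2 * P n k) := by
      intro k _
      rw [ENNReal.ofReal_mul (sq_nonneg _), ← ENNReal.ofReal_natCast k,
        ← ENNReal.ofReal_pow (Nat.cast_nonneg k)]
    rw [Finset.sum_congr rfl this, ← ENNReal.ofReal_sum_of_nonneg
      (fun k _ => mul_nonneg (sq_nonneg _) (hPnn n k)), hPsum2 n]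
  have hDt : D = ∑' n : ℕ, μ {ω | Y ω = n} * ENNReal.ofReal (((n:ℝ))^2) := by
    rw [hD, key (fun n _ => ((n : ℝ≥0∞))^2)]
    refine tsum_congr fun n => ?_
    congr 1
    rw [← Finset.mul_sum, ← ENNReal.ofReal_sum_of_nonneg (fun k _ => hPnn n k), hPsum n]
    rw [← ENNReal.ofReal_natCast n, ← ENNReal.ofReal_pow (Nat.cast_nonneg n)]
    simp
  -- the main identity in ℝ≥0∞
  have keyid : C + ENNReal.ofReal (β^2) * A = ENNReal.ofReal (β^2) * D + ENNReal.ofReal β * A := by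
    rw [hAt, hCt, hDt, ← ENNReal.tsum_mul_left, ← ENNReal.tsum_mul_left (a := ENNReal.ofReal β),
      ← ENNReal.tsum_mul_left (a := ENNReal.ofReal (β^2)), ← ENNReal.tsum_add, ← ENNReal.tsum_add]
    refine tsum_congr fun n => ?_
    have hn : (0:ℝ) ≤ n := Nat.cast_nonneg n
    have h1 : (0:ℝ) ≤ (n:ℝ) * β + n * (n-1) * β^2 := by
      rcases Nat.eq_zero_or_pos n with rfl | hpos
      · simp
      · have h1n : (1:ℝ) ≤ n := by exact_mod_cast hpos
        have : (0:ℝ) ≤ (n:ℝ) * ((n:ℝ)-1) := mul_nonneg hn (by linarith)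
        positivity
    calc μ {ω | Y ω = n} * ENNReal.ofReal ((n:ℝ) * β + n * (n-1) * β^2)
          + ENNReal.ofReal (β^2) * (μ {ω | Y ω = n} * ENNReal.ofReal ((n:ℝ)))
        = μ {ω | Y ω = n} * (ENNReal.ofReal ((n:ℝ) * β + n * (n-1) * β^2)
            + ENNReal.ofReal (β^2) * ENNReal.ofReal ((n:ℝ))) := by ring
      _ = μ {ω | Y ω = n} * (ENNReal.ofReal (β^2) * ENNReal.ofReal (((n:ℝ))^2)
            + ENNReal.ofReal β * ENNReal.ofReal ((n:ℝ))) := by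
          congr 1
          rw [← ENNReal.ofReal_mul (sq_nonneg β), ← ENNReal.ofReal_mul (sq_nonneg β),
            ← ENNReal.ofReal_mul hβ0, ← ENNReal.ofReal_add h1 (by positivity),
            ← ENNReal.ofReal_add (by positivity) (by positivity)]
          congr 1
          ring
      _ = ENNReal.ofReal (β^2) * (μ {ω | Y ω = n} * ENNReal.ofReal (((n:ℝ))^2))
            + ENNReal.ofReal β * (μ {ω | Y ω = n} * ENNReal.ofReal ((n:ℝ))) := by ring
  -- finiteness
  have heqY : ∀ ω : Ω, ENNReal.ofReal (((Y ω : ℝ))^2) = ((Y ω : ℝ≥0∞))^2 := fun ω => by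
    rw [← ENNReal.ofReal_natCast (Y ω), ← ENNReal.ofReal_pow (Nat.cast_nonneg _)]
  have heqT : ∀ ω : Ω, ENNReal.ofReal (((T ω : ℝ))^2) = ((T ω : ℝ≥0∞))^2 := fun ω => by
    rw [← ENNReal.ofReal_natCast (T ω), ← ENNReal.ofReal_pow (Nat.cast_nonneg _)]
  have hDfin : D ≠ ∞ := by
    have hnn : 0 ≤ᵐ[μ] fun ω => ((Y ω : ℝ))^2 :=
      Filter.Eventually.of_forall fun ω => sq_nonneg _
    have hfin := (hasFiniteIntegral_iff_ofReal hnn).1 hY2.hasFiniteIntegral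
    simp only [heqY] at hfin
    exact hfin.ne
  have hAfin : A ≠ ∞ := by
    refine ne_top_of_le_ne_top hDfin (lintegral_mono fun ω => ?_)
    have hn : Y ω ≤ (Y ω)^2 := Nat.le_self_pow two_ne_zero _
    calc (Y ω : ℝ≥0∞) ≤ (((Y ω)^2 : ℕ) : ℝ≥0∞) := by exact_mod_cast hn
      _ = ((Y ω : ℝ≥0∞))^2 := by push_cast; ring
  have hBeq : B = ENNReal.ofReal β * A := by
    rw [hBt, hAt, ← ENNReal.tsum_mul_left]
    refine tsum_congr fun n => ?_
    rw [show (n:ℝ) * β = β * (n:ℝ) by ring, ENNReal.ofReal_mul hβ0]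
    ring
  have hBfin : B ≠ ∞ := by
    rw [hBeq]; exact ENNReal.mul_ne_top ENNReal.ofReal_ne_top hAfin
  have hCfin : C ≠ ∞ := by
    refine ne_top_of_le_ne_top ?_ (le_trans le_self_add keyid.le)
    exact ENNReal.add_ne_top.2 ⟨ENNReal.mul_ne_top ENNReal.ofReal_ne_top hDfin,
      ENNReal.mul_ne_top ENNReal.ofReal_ne_top hAfin⟩
  -- real integrals
  have hmY : Measurable fun ω => (Y ω : ℝ) := (measurable_of_countable _).comp hY
  have hmT : Measurable fun ω => (T ω : ℝ) := (measurable_of_countable _).comp hT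
  have hEY : ∫ ω, (Y ω : ℝ) ∂μ = A.toReal := by
    rw [integral_eq_lintegral_of_nonneg_ae
      (Filter.Eventually.of_forall fun ω => Nat.cast_nonneg _) hmY.aestronglyMeasurable, hA]
    congr 1
    exact lintegral_congr fun ω => ENNReal.ofReal_natCast _
  have hET : ∫ ω, (T ω : ℝ) ∂μ = B.toReal := by
    rw [integral_eq_lintegral_of_nonneg_ae
      (Filter.Eventually.of_forall fun ω => Nat.cast_nonneg _) hmT.aestronglyMeasurable, hB]
    congr 1
    exact lintegral_congr fun ω => ENNReal.ofReal_natCast _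
  have hEY2 : ∫ ω, ((Y ω : ℝ))^2 ∂μ = D.toReal := by
    rw [integral_eq_lintegral_of_nonneg_ae
      (Filter.Eventually.of_forall fun ω => sq_nonneg _)
      (hmY.pow_const 2).aestronglyMeasurable, hD]
    congr 1
    exact lintegral_congr fun ω => heqY ω
  have hET2 : ∫ ω, ((T ω : ℝ))^2 ∂μ = C.toReal := by
    rw [integral_eq_lintegral_of_nonneg_ae
      (Filter.Eventually.of_forall fun ω => sq_nonneg _)
      (hmT.pow_const 2).aestronglyMeasurable, hC]
    congr 1
    exact lintegral_congr fun ω => heqT ω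
  -- integrability / MemLp
  have hTint2 : Integrable (fun ω => ((T ω : ℝ))^2) μ := by
    refine ⟨(hmT.pow_const 2).aestronglyMeasurable, ?_⟩
    rw [hasFiniteIntegral_iff_ofReal (Filter.Eventually.of_forall fun ω => sq_nonneg _)]
    simp only [heqT]
    exact hCfin.lt_top
  have hTmem : MemLp (fun ω => (T ω : ℝ)) 2 μ :=
    (memLp_two_iff_integrable_sq hmT.aestronglyMeasurable).2 hTint2
  have hYmem : MemLp (fun ω => (Y ω : ℝ)) 2 μ :=
    (memLp_two_iff_integrable_sq hmY.aestronglyMeasurable).2 hY2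
  refine ⟨hTmem, ?_⟩
  -- toReal identities
  have hreal : C.toReal + β^2 * A.toReal = β^2 * D.toReal + β * A.toReal := by
    have h1 := congrArg ENNReal.toReal keyid
    rw [ENNReal.toReal_add hCfin (ENNReal.mul_ne_top ENNReal.ofReal_ne_top hAfin),
      ENNReal.toReal_add (ENNReal.mul_ne_top ENNReal.ofReal_ne_top hDfin)
        (ENNReal.mul_ne_top ENNReal.ofReal_ne_top hAfin),
      ENNReal.toReal_mul, ENNReal.toReal_mul, ENNReal.toReal_mul,
      ENNReal.toReal_ofReal hβ0, ENNReal.toReal_ofReal (sq_nonneg β)] at h1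
    exact h1
  have hBreal : B.toReal = β * A.toReal := by
    rw [hBeq, ENNReal.toReal_mul, ENNReal.toReal_ofReal hβ0]
  rw [variance_eq_sub hTmem, variance_eq_sub hYmem]
  have hsqT : (fun ω => (T ω : ℝ))^2 = fun ω => ((T ω : ℝ))^2 := by
    funext ω; simp
  have hsqY : (fun ω => (Y ω : ℝ))^2 = fun ω => ((Y ω : ℝ))^2 := by
    funext ω; simp
  simp only [hsqT, hsqY]
  rw [hET2, hET, hEY2, hEY, hBreal]
  linear_combination hreal


end Moments

/-- **Marginal variance of the INMA(q₁,q₂) random field.**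
For `X_{s,t} = ∑_{i=0}^{q₁} ∑_{j=0}^{q₂} β_{ij}∘ε_{s−i,t−j}` with `β_{ij} ∈ [0,1]`,
i.i.d. innovations with mean `μ_ε`, variance `σ_ε²` and finite second moment,
binomial thinnings, and the summands (thinnings of distinct innovations) mutually
independent, the marginal variance is
`σ_X² = μ_X + (σ_ε² − μ_ε)·∑_{i,j} β_{ij}²`, where `μ_X = μ_ε β_•`. -/
theorem INMA_variance
    {Ω : Type*} [MeasurableSpace Ω] (μ : Measure Ω) [IsProbabilityMeasure μ]
    (q₁ q₂ : ℕ) (X : ℤ → ℤ → Ω → ℕ) (ε : ℤ → ℤ → Ω → ℕ)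
    (W : ℕ → ℕ → ℤ → ℤ → Ω → ℕ)
    (β : ℕ → ℕ → ℝ)
    (hβ : ∀ i ∈ Finset.range (q₁ + 1), ∀ j ∈ Finset.range (q₂ + 1),
      β i j ∈ Set.Icc (0 : ℝ) 1)
    (hεmeas : ∀ s t, Measurable (ε s t))
    (hWmeas : ∀ i j s t, Measurable (W i j s t))
    (hthin : ∀ i ∈ Finset.range (q₁ + 1), ∀ j ∈ Finset.range (q₂ + 1), ∀ s t : ℤ,
      IsBinomialThinning μ (β i j) (ε (s - (i : ℤ)) (t - (j : ℤ))) (W i j s t))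
    (hWindep : ∀ s t : ℤ,
      iIndepFun (fun p : ℕ × ℕ => W p.1 p.2 s t) μ)
    (hrec : ∀ s t ω, X s t ω
      = ∑ i ∈ Finset.range (q₁ + 1), ∑ j ∈ Finset.range (q₂ + 1), W i j s t ω)
    (με σε2 : ℝ)
    (hεmom2 : ∀ s t, Integrable (fun ω => ((ε s t ω : ℝ)) ^ 2) μ)
    (hεmean : ∀ s t, ∫ ω, (ε s t ω : ℝ) ∂μ = με)
    (hεvar : ∀ s t : ℤ, variance (fun ω => (ε s t ω : ℝ)) μ = σε2) :
    ∀ s t : ℤ, variance (fun ω => (X s t ω : ℝ)) μ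
      = (με * ∑ i ∈ Finset.range (q₁ + 1), ∑ j ∈ Finset.range (q₂ + 1), β i j)
        + (σε2 - με)
          * ∑ i ∈ Finset.range (q₁ + 1), ∑ j ∈ Finset.range (q₂ + 1), (β i j) ^ 2 := by
  intro s t
  set s₀ : Finset (ℕ × ℕ) := Finset.range (q₁ + 1) ×ˢ Finset.range (q₂ + 1) with hs₀
  have hmem : ∀ p ∈ s₀, p.1 ∈ Finset.range (q₁ + 1) ∧ p.2 ∈ Finset.range (q₂ + 1) := by
    intro p hp; exact Finset.mem_product.1 hp
  have hkey : ∀ p ∈ s₀,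
      MemLp (fun ω => (W p.1 p.2 s t ω : ℝ)) 2 μ ∧
      variance (fun ω => (W p.1 p.2 s t ω : ℝ)) μ
        = με * β p.1 p.2 + (σε2 - με) * (β p.1 p.2) ^ 2 := by
    intro p hp
    obtain ⟨h1, h2⟩ := hmem p hp
    obtain ⟨hb0, hb1⟩ := hβ p.1 h1 p.2 h2
    have := thin_variance μ (β p.1 p.2) hb0 hb1
      (ε (s - (p.1 : ℤ)) (t - (p.2 : ℤ))) (W p.1 p.2 s t)
      (hεmeas _ _) (hWmeas _ _ _ _) (hthin p.1 h1 p.2 h2 s t) (hεmom2 _ _)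
    refine ⟨this.1, ?_⟩
    rw [this.2, hεmean, hεvar]
    ring
  have hXeq : (fun ω => (X s t ω : ℝ)) = ∑ p ∈ s₀, (fun ω => (W p.1 p.2 s t ω : ℝ)) := by
    funext ω
    rw [Finset.sum_apply, hrec s t ω]
    push_cast
    rw [hs₀, Finset.sum_product]
  have hpair : Set.Pairwise ↑s₀ fun p q : ℕ × ℕ =>
      IndepFun (fun ω => (W p.1 p.2 s t ω : ℝ)) (fun ω => (W q.1 q.2 s t ω : ℝ)) μ := by
    intro p _ q _ hpq
    exact ((hWindep s t).indepFun hpq).comp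
      (measurable_of_countable (fun n : ℕ => (n : ℝ)))
      (measurable_of_countable (fun n : ℕ => (n : ℝ)))
  rw [hXeq, IndepFun.variance_sum (fun p hp => (hkey p hp).1) hpair]
  rw [Finset.sum_congr rfl (fun p hp => (hkey p hp).2)]
  rw [hs₀, Finset.sum_product]
  rw [show (∑ i ∈ Finset.range (q₁ + 1), ∑ j ∈ Finset.range (q₂ + 1),
      (με * β i j + (σε2 - με) * (β i j) ^ 2))
    = (∑ i ∈ Finset.range (q₁ + 1), ∑ j ∈ Finset.range (q₂ + 1), με * β i j)
      + ∑ i ∈ Finset.range (q₁ + 1), ∑ j ∈ Finset.range (q₂ + 1),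
          (σε2 - με) * (β i j) ^ 2 by
    rw [← Finset.sum_add_distrib]
    exact Finset.sum_congr rfl fun i _ => Finset.sum_add_distrib]
  simp only [← Finset.mul_sum]
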